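/- Let G = {g_1,…,g_ν} be an O-border prebasis of a zero-dimensional ideal I (over a field K) whose formal multiplication matrices A_1,…,A_n pairwise commute. Then G is an O-border basis of the ideal it generates, i.e., P = (G) ⊕ ⟨O⟩_K. -/

import Mathlib

open MvPolynomial Finsupp

open scoped Classical

/-- The border of a finite set of monomials (represented as exponent vectors). -/
noncomputable def borderSet (n : ℕ) (O : Finset (Fin n →₀ ℕ)) : Finset (Fin n →₀ ℕ) :=
  (O.biUnion (fun t => Finset.image (fun k => t + Finsupp.single k 1) Finset.univ)) \ O

section Aux

variable {K : Type*} [Field K] {n : ℕ} {O : Finset (Fin n →₀ ℕ)}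

theorem Mmat_comm (A : Fin n → Matrix ↥O ↥O K)
    (hcomm : ∀ k l : Fin n, A k * A l = A l * A k) (α : Fin n →₀ ℕ) :
    ((Finset.univ : Finset (Fin n)) : Set (Fin n)).Pairwise
      (Function.onFun Commute fun k => A k ^ α k) :=
  fun k _ l _ _ => Commute.pow_pow (hcomm k l) _ _

/-- The product of powers of the formal multiplication matrices. -/
noncomputable def Mmat (A : Fin n → Matrix ↥O ↥O K)
    (hcomm : ∀ k l : Fin n, A k * A l = A l * A k) (α : Fin n →₀ ℕ) : Matrix ↥O ↥O K :=
  Finset.univ.noncommProd (fun k => A k ^ α k) (Mmat_comm A hcomm α)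

theorem Mmat_zero (A : Fin n → Matrix ↥O ↥O K)
    (hcomm : ∀ k l : Fin n, A k * A l = A l * A k) : Mmat A hcomm 0 = 1 := by
  rw [Mmat, Finset.noncommProd_eq_pow_card _ _ _ 1 (by intro x _; simp), one_pow]

theorem Mmat_add_single (A : Fin n → Matrix ↥O ↥O K)
    (hcomm : ∀ k l : Fin n, A k * A l = A l * A k) (α : Fin n →₀ ℕ) (k : Fin n) :
    Mmat A hcomm (α + Finsupp.single k 1) = A k * Mmat A hcomm α := by
  have key : ∀ β : Fin n →₀ ℕ,
      Mmat A hcomm β = A k ^ β k *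
        (Finset.univ.erase k).noncommProd (fun j => A j ^ β j)
          (fun x _ y _ _ => Commute.pow_pow (hcomm x y) _ _) := by
    intro β
    rw [Mmat, Finset.noncommProd_congr (Finset.insert_erase (Finset.mem_univ k)).symm
      (fun x _ => rfl) _]
    exact Finset.noncommProd_insert_of_notMem _ _ _ _ (Finset.notMem_erase k _)
  rw [key, key α]
  have hpoint : ∀ x : Fin n, x ≠ k →
      ((α + Finsupp.single k 1) : Fin n →₀ ℕ) x = α x := by
    intro x hx
    rw [Finsupp.add_apply, Finsupp.single_apply, if_neg (fun h => hx h.symm), add_zero]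
  have h1 : ((α + Finsupp.single k 1) : Fin n →₀ ℕ) k = α k + 1 := by
    rw [Finsupp.add_apply, Finsupp.single_eq_same]
  have h2 : (Finset.univ.erase k).noncommProd
      (fun j => A j ^ (((α + Finsupp.single k 1) : Fin n →₀ ℕ) j))
      (fun x _ y _ _ => Commute.pow_pow (hcomm x y) _ _) =
      (Finset.univ.erase k).noncommProd (fun j => A j ^ α j)
      (fun x _ y _ _ => Commute.pow_pow (hcomm x y) _ _) := by
    refine Finset.noncommProd_congr rfl (fun x hx => ?_) _
    rw [hpoint x (Finset.mem_erase.mp hx).1]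
  rw [h2, h1, pow_succ', mul_assoc]

/-- The vector to which a monomial is sent. -/
noncomputable def vvec (h0 : (0 : Fin n →₀ ℕ) ∈ O) (A : Fin n → Matrix ↥O ↥O K)
    (hcomm : ∀ k l : Fin n, A k * A l = A l * A k) (α : Fin n →₀ ℕ) : ↥O → K :=
  (Mmat A hcomm α).mulVec (Pi.single (⟨0, h0⟩ : ↥O) 1)

theorem vvec_add_single (h0 : (0 : Fin n →₀ ℕ) ∈ O) (A : Fin n → Matrix ↥O ↥O K)
    (hcomm : ∀ k l : Fin n, A k * A l = A l * A k) (α : Fin n →₀ ℕ) (k : Fin n) :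
    vvec h0 A hcomm (α + Finsupp.single k 1) = (A k).mulVec (vvec h0 A hcomm α) := by
  rw [vvec, vvec, Mmat_add_single, ← Matrix.mulVec_mulVec]

/-- total degree of an exponent vector -/
def degF {n : ℕ} (α : Fin n →₀ ℕ) : ℕ := α.sum fun _ m => m

theorem degF_add_single {n : ℕ} (α : Fin n →₀ ℕ) (k : Fin n) :
    degF (α + Finsupp.single k 1) = degF α + 1 := by
  unfold degF
  rw [Finsupp.sum_add_index' (fun _ => rfl) (fun _ _ _ => rfl),
    Finsupp.sum_single_index rfl]

theorem sub_add_single {n : ℕ} (α : Fin n →₀ ℕ) (k : Fin n) (h : α k ≠ 0) :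
    α - Finsupp.single k 1 + Finsupp.single k 1 = α := by
  ext j
  by_cases hj : j = k
  · subst hj
    have hj' : α j ≠ 0 := h
    simp only [Finsupp.add_apply, Finsupp.tsub_apply, Finsupp.single_eq_same]
    omega
  · simp [Finsupp.single_apply, Ne.symm hj]

end Aux

/-- **Buchberger criterion for border bases.** If the formal multiplication matrices of an
`O`-border prebasis pairwise commute, then the prebasis is an `O`-border basis of the ideal it
generates, i.e. `P = (G) ⊕ ⟨O⟩_K`. -/
theorem borderBasis_of_commuting_multiplication_matrices
    (K : Type*) [Field K] (n : ℕ)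
    (O : Finset (Fin n →₀ ℕ)) (h0 : (0 : Fin n →₀ ℕ) ∈ O)
    (hO : ∀ t ∈ O, ∀ s : Fin n →₀ ℕ, s ≤ t → s ∈ O)
    -- the coefficients of the prebasis: `g b = b - Σ_{t ∈ O} a b t · t`
    (a : (Fin n →₀ ℕ) → (Fin n →₀ ℕ) → K)
    (g : (Fin n →₀ ℕ) → MvPolynomial (Fin n) K)
    (hgdef : ∀ b ∈ borderSet n O,
      g b = monomial b 1 - ∑ t ∈ O, MvPolynomial.C (a b t) * monomial t 1)
    -- the formal multiplication matrices
    (A : Fin n → Matrix ↥O ↥O K)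
    (hA : ∀ (k : Fin n) (r i : ↥O), A k r i =
      if ((i : Fin n →₀ ℕ) + Finsupp.single k 1) ∈ O then
        (if (r : Fin n →₀ ℕ) = (i : Fin n →₀ ℕ) + Finsupp.single k 1 then 1 else 0)
      else a ((i : Fin n →₀ ℕ) + Finsupp.single k 1) r)
    (hcomm : ∀ k l : Fin n, A k * A l = A l * A k) :
    IsCompl
      (Submodule.restrictScalars K
        (Ideal.span {p : MvPolynomial (Fin n) K | ∃ b ∈ borderSet n O, p = g b}))
      (Submodule.span K {p : MvPolynomial (Fin n) K | ∃ t ∈ O, p = monomial t 1}) := by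
  set v : (Fin n →₀ ℕ) → (↥O → K) := vvec h0 A hcomm with hv
  -- value of v on monomials of O
  have hv_mem : ∀ (t : Fin n →₀ ℕ) (ht : t ∈ O), v t = Pi.single (⟨t, ht⟩ : ↥O) 1 := by
    suffices H : ∀ (d : ℕ) (t : Fin n →₀ ℕ) (ht : t ∈ O), degF t = d →
        v t = Pi.single (⟨t, ht⟩ : ↥O) 1 by
      intro t ht; exact H (degF t) t ht rfl
    intro d
    induction d using Nat.strong_induction_on with
    | _ d IH =>
      intro t ht hdeg
      by_cases h : t = 0
      · subst h
        have hz : v 0 = Pi.single (⟨0, h0⟩ : ↥O) 1 := by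
          rw [hv, vvec, Mmat_zero, Matrix.one_mulVec]
        rw [hz]
      · obtain ⟨k, hk⟩ := Finsupp.ne_iff.mp h
        rw [Finsupp.coe_zero, Pi.zero_apply] at hk
        set t' : Fin n →₀ ℕ := t - Finsupp.single k 1 with ht'def
        have hts : t' + Finsupp.single k 1 = t := sub_add_single t k hk
        have ht' : t' ∈ O := hO t ht t' tsub_le_self
        have hdeg' : degF t' + 1 = d := by rw [← hdeg, ← hts, degF_add_single]
        have hvt' := IH (degF t') (by omega) t' ht' rfl
        have : v t = (A k).mulVec (v t') := by
          rw [hv, ← hts, vvec_add_single]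
        rw [this, hvt', Matrix.mulVec_single_one]
        funext r
        rw [Matrix.col_apply, hA k r ⟨t', ht'⟩]
        have hcoe : ((⟨t', ht'⟩ : ↥O) : Fin n →₀ ℕ) = t' := rfl
        rw [hcoe, hts, if_pos ht, Pi.single_apply]
        by_cases hr : (r : Fin n →₀ ℕ) = t
        · rw [if_pos hr, if_pos (Subtype.ext hr)]
        · rw [if_neg hr, if_neg (fun hh => hr (by rw [hh]))]
  -- value of v on border monomials
  have hv_border : ∀ b ∈ borderSet n O, v b = fun r : ↥O => a b (r : Fin n →₀ ℕ) := by
    intro b hb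
    rw [borderSet, Finset.mem_sdiff] at hb
    obtain ⟨hb1, hb2⟩ := hb
    obtain ⟨t, htO, hmem⟩ := Finset.mem_biUnion.mp hb1
    obtain ⟨k, -, hbk⟩ := Finset.mem_image.mp hmem
    have : v b = (A k).mulVec (v t) := by rw [hv, ← hbk, vvec_add_single]
    rw [this, hv_mem t htO, Matrix.mulVec_single_one]
    funext r
    rw [Matrix.col_apply, hA k r ⟨t, htO⟩]
    have hcoe : ((⟨t, htO⟩ : ↥O) : Fin n →₀ ℕ) = t := rfl
    rw [hcoe, hbk, if_neg hb2]
  -- the linear map φ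
  set φ : MvPolynomial (Fin n) K →ₗ[K] (↥O → K) :=
    (MvPolynomial.basisMonomials (Fin n) K).constr K v with hφ
  have hbasis : ∀ α : Fin n →₀ ℕ,
      (MvPolynomial.basisMonomials (Fin n) K) α = monomial α 1 :=
    fun α => congrFun (MvPolynomial.coe_basisMonomials (Fin n) K) α
  have hφ_mono : ∀ α : Fin n →₀ ℕ, φ (monomial α 1) = v α := by
    intro α
    rw [hφ, ← hbasis α]
    exact Module.Basis.constr_basis _ K v α
  -- φ intertwines multiplication by X k with A k
  have hφ_X : ∀ (k : Fin n) (p : MvPolynomial (Fin n) K),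
      φ (X k * p) = (A k).mulVec (φ p) := by
    intro k p
    have hmaps : φ ∘ₗ (LinearMap.mulLeft K (X k : MvPolynomial (Fin n) K)) =
        (Matrix.mulVecLin (A k)) ∘ₗ φ := by
      apply Module.Basis.ext (MvPolynomial.basisMonomials (Fin n) K)
      intro α
      rw [hbasis α]
      simp only [LinearMap.comp_apply, LinearMap.mulLeft_apply]
      have hXm : (X k : MvPolynomial (Fin n) K) * monomial α 1 =
          monomial (α + Finsupp.single k 1) 1 := by
        rw [show (X k : MvPolynomial (Fin n) K) = monomial (Finsupp.single k 1) 1 by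
          rw [← X_pow_eq_monomial, pow_one], monomial_mul, one_mul, add_comm]
      rw [hXm, hφ_mono, hφ_mono, Matrix.mulVecLin_apply, hv, vvec_add_single]
    have := congrFun (congrArg DFunLike.coe hmaps) p
    simpa using this
  -- φ kills the prebasis
  have hφ_g : ∀ b ∈ borderSet n O, φ (g b) = 0 := by
    intro b hb
    rw [hgdef b hb, map_sub, map_sum, hφ_mono, hv_border b hb]
    have hterm : ∀ t ∈ O, φ (MvPolynomial.C (a b t) * monomial t 1) = a b t • v t := by
      intro t ht
      rw [C_mul', map_smul, hφ_mono]
    rw [Finset.sum_congr rfl hterm]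
    have hsum : ∑ t ∈ O, a b t • v t =
        ∑ t ∈ O.attach, a b (t : Fin n →₀ ℕ) • (Pi.single t 1 : ↥O → K) := by
      rw [← Finset.sum_attach O (fun t => a b t • v t)]
      refine Finset.sum_congr rfl (fun t _ => ?_)
      rw [hv_mem t t.2]
    rw [hsum]
    funext r
    simp only [Pi.sub_apply, Finset.sum_apply, Pi.smul_apply, smul_eq_mul,
      Pi.single_apply, mul_ite, mul_one, mul_zero, Pi.zero_apply]
    rw [Finset.sum_ite_eq O.attach r (fun t => a b (t : Fin n →₀ ℕ)),
      if_pos (Finset.mem_attach _ _), sub_self]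
  -- φ kills products with ideal elements
  have hφ_mul : ∀ p q : MvPolynomial (Fin n) K, φ q = 0 → φ (p * q) = 0 := by
    intro p
    induction p using MvPolynomial.induction_on with
    | C c => intro q hq; rw [C_mul', map_smul, hq, smul_zero]
    | add p1 p2 ih1 ih2 =>
      intro q hq; rw [add_mul, map_add, ih1 q hq, ih2 q hq, add_zero]
    | mul_X p k ih =>
      intro q hq
      have : p * X k * q = X k * (p * q) := by ring
      rw [this, hφ_X, ih q hq, Matrix.mulVec_zero]
  -- φ kills the ideal
  have hφ_I : ∀ p ∈ Ideal.span {p : MvPolynomial (Fin n) K | ∃ b ∈ borderSet n O, p = g b},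
      φ p = 0 := by
    intro p hp
    refine Submodule.span_induction ?_ ?_ ?_ ?_ hp
    · rintro x ⟨b, hb, rfl⟩; exact hφ_g b hb
    · exact map_zero φ
    · intro x y _ _ hx hy; rw [map_add, hx, hy, add_zero]
    · intro c x _ hx; rw [smul_eq_mul]; exact hφ_mul c x hx
  constructor
  · -- disjointness
    rw [Submodule.disjoint_def]
    intro x hxI hxO
    have hφx : φ x = 0 := hφ_I x hxI
    have hset : {p : MvPolynomial (Fin n) K | ∃ t ∈ O, p = monomial t 1} =
        ↑(O.image (fun t => (monomial t (1 : K) : MvPolynomial (Fin n) K))) := by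
      ext p
      simp only [Set.mem_setOf_eq, Finset.coe_image, Set.mem_image, Finset.mem_coe]
      constructor
      · rintro ⟨t, ht, rfl⟩; exact ⟨t, ht, rfl⟩
      · rintro ⟨t, ht, rfl⟩; exact ⟨t, ht, rfl⟩
    rw [hset] at hxO
    obtain ⟨f, -, hf⟩ := Submodule.mem_span_finset.mp hxO
    have hinj : Set.InjOn (fun t => (monomial t (1 : K) : MvPolynomial (Fin n) K)) ↑O :=
      fun t1 _ t2 _ h => monomial_left_injective one_ne_zero h
    rw [Finset.sum_image hinj] at hf
    set c : (Fin n →₀ ℕ) → K := fun t => f (monomial t 1) with hc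
    have hx : x = ∑ t ∈ O, c t • monomial t 1 := hf.symm
    have hφx2 : φ x = ∑ t ∈ O.attach, c (t : Fin n →₀ ℕ) • (Pi.single t 1 : ↥O → K) := by
      rw [hx, map_sum, ← Finset.sum_attach O (fun t => φ (c t • monomial t 1))]
      refine Finset.sum_congr rfl (fun t _ => ?_)
      rw [map_smul, hφ_mono, hv_mem t t.2]
    have hc0 : ∀ r : ↥O, c (r : Fin n →₀ ℕ) = 0 := by
      intro r
      have := congrFun (hφx2.symm.trans hφx) r
      simp only [Finset.sum_apply, Pi.smul_apply, smul_eq_mul, Pi.single_apply,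
        mul_ite, mul_one, mul_zero, Pi.zero_apply] at this
      rwa [Finset.sum_ite_eq O.attach r (fun t => c (t : Fin n →₀ ℕ)),
        if_pos (Finset.mem_attach _ _)] at this
    rw [hx]
    refine Finset.sum_eq_zero (fun t ht => ?_)
    rw [show c t = 0 from hc0 ⟨t, ht⟩, zero_smul]
  · -- codisjointness
    rw [codisjoint_iff, eq_top_iff]
    set T := Submodule.restrictScalars K
        (Ideal.span {p : MvPolynomial (Fin n) K | ∃ b ∈ borderSet n O, p = g b}) ⊔
      Submodule.span K {p : MvPolynomial (Fin n) K | ∃ t ∈ O, p = monomial t 1} with hT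
    have hXT : ∀ (k : Fin n) (q : MvPolynomial (Fin n) K), q ∈ T → X k * q ∈ T := by
      intro k q hq
      obtain ⟨i, hi, o, ho, rfl⟩ := Submodule.mem_sup.mp hq
      rw [mul_add]
      refine Submodule.add_mem _ ?_ ?_
      · exact Submodule.mem_sup_left (Ideal.mul_mem_left _ _ hi)
      · refine Submodule.span_induction ?_ ?_ ?_ ?_ ho
        · rintro x ⟨t, ht, rfl⟩
          have hXm : (X k : MvPolynomial (Fin n) K) * monomial t 1 =
              monomial (t + Finsupp.single k 1) 1 := by
            rw [show (X k : MvPolynomial (Fin n) K) = monomial (Finsupp.single k 1) 1 by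
              rw [← X_pow_eq_monomial, pow_one], monomial_mul, one_mul, add_comm]
          rw [hXm]
          by_cases hu : t + Finsupp.single k 1 ∈ O
          · exact Submodule.mem_sup_right (Submodule.subset_span ⟨_, hu, rfl⟩)
          · have hbmem : t + Finsupp.single k 1 ∈ borderSet n O := by
              rw [borderSet, Finset.mem_sdiff]
              exact ⟨Finset.mem_biUnion.mpr ⟨t, ht,
                Finset.mem_image.mpr ⟨k, Finset.mem_univ k, rfl⟩⟩, hu⟩
            have heq : (monomial (t + Finsupp.single k 1) 1 : MvPolynomial (Fin n) K) =
                g (t + Finsupp.single k 1) +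
                ∑ t' ∈ O, MvPolynomial.C (a (t + Finsupp.single k 1) t') * monomial t' 1 := by
              rw [hgdef _ hbmem, sub_add_cancel]
            rw [heq]
            refine Submodule.add_mem _ ?_ ?_
            · exact Submodule.mem_sup_left (Ideal.subset_span ⟨_, hbmem, rfl⟩)
            · refine Submodule.sum_mem _ (fun t' ht' => ?_)
              rw [C_mul']
              exact Submodule.mem_sup_right
                (Submodule.smul_mem _ _ (Submodule.subset_span ⟨t', ht', rfl⟩))
        · rw [mul_zero]; exact Submodule.zero_mem _
        · intro x y _ _ hx hy; rw [mul_add]; exact Submodule.add_mem _ hx hy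
        · intro r x _ hx
          rw [mul_smul_comm]
          exact Submodule.smul_mem _ _ hx
    have hmonoT : ∀ (d : ℕ) (α : Fin n →₀ ℕ), degF α ≤ d →
        (monomial α 1 : MvPolynomial (Fin n) K) ∈ T := by
      intro d
      induction d with
      | zero =>
        intro α hα
        have hα0 : α = 0 := by
          by_contra h
          obtain ⟨k, hk⟩ := Finsupp.ne_iff.mp h
          rw [Finsupp.coe_zero, Pi.zero_apply] at hk
          have := degF_add_single (α - Finsupp.single k 1) k
          rw [sub_add_single α k hk] at this
          omega
        subst hα0
        exact Submodule.mem_sup_right (Submodule.subset_span ⟨0, h0, rfl⟩)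
      | succ d IH =>
        intro α hα
        by_cases h : α = 0
        · subst h
          exact Submodule.mem_sup_right (Submodule.subset_span ⟨0, h0, rfl⟩)
        · obtain ⟨k, hk⟩ := Finsupp.ne_iff.mp h
          rw [Finsupp.coe_zero, Pi.zero_apply] at hk
          set β : Fin n →₀ ℕ := α - Finsupp.single k 1 with hβ
          have hβα : β + Finsupp.single k 1 = α := sub_add_single α k hk
          have hdegβ : degF β + 1 = degF α := by rw [← hβα, degF_add_single]
          have hbT : (monomial β 1 : MvPolynomial (Fin n) K) ∈ T := IH β (by omega)
          have := hXT k _ hbT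
          have hXm : (X k : MvPolynomial (Fin n) K) * monomial β 1 =
              monomial (β + Finsupp.single k 1) 1 := by
            rw [show (X k : MvPolynomial (Fin n) K) = monomial (Finsupp.single k 1) 1 by
              rw [← X_pow_eq_monomial, pow_one], monomial_mul, one_mul, add_comm]
          rwa [hXm, hβα] at this
    rw [← Module.Basis.span_eq (MvPolynomial.basisMonomials (Fin n) K)]
    refine Submodule.span_le.mpr ?_
    rintro _ ⟨α, rfl⟩
    rw [hbasis α]
    exact hmonoT (degF α) α le_rfl
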